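/- Let F and G be real two-forms on Minkowski space, regarded as complex matrices, and set A := (1/2)·(F − i·*F), B := (1/2)·(G − i·*G). If D is a self-dual complex two-form with exp(A)·exp(B) = exp(D), then exp(F)·exp(G) = exp(D + conj(D)), where conj(D) denotes the entrywise complex conjugate of D (so that D + conj(D) = 2·Re(D) is a real two-form). -/

import Mathlib

open Matrix

noncomputable section

/-- The Minkowski metric matrix `diag(1,-1,-1,-1)`. -/
def minkEta : Matrix (Fin 4) (Fin 4) ℂ := Matrix.diagonal ![1, -1, -1, -1]

/-- The Levi-Civita symbol `ε(i,j,k,l)`: the sign of `(i,j,k,l)` as a permutation of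
`(0,1,2,3)`, and `0` if the indices are not all distinct; `ε(0,1,2,3) = 1`. -/
def eps (i j k l : Fin 4) : ℂ :=
  Matrix.det (Matrix.of ![Pi.single i 1, Pi.single j 1, Pi.single k 1, Pi.single l 1])

/-- A (complex) two-form on Minkowski space: `Fᵀ·η + η·F = 0`. -/
def IsTwoForm (F : Matrix (Fin 4) (Fin 4) ℂ) : Prop :=
  Fᵀ * minkEta + minkEta * F = 0

/-- The Hodge dual of a two-form:
`(*F)^μ_ν = (1/2)·Σ η_{μρ}·ε(ρ,ν,σ,τ)·F^σ_λ·η_{λτ}`. -/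
def dual (F : Matrix (Fin 4) (Fin 4) ℂ) : Matrix (Fin 4) (Fin 4) ℂ :=
  Matrix.of fun μ ν => (1/2 : ℂ) *
    ∑ ρ : Fin 4, ∑ σ : Fin 4, ∑ lam : Fin 4, ∑ τ : Fin 4,
      minkEta μ ρ * eps ρ ν σ τ * F σ lam * minkEta lam τ

/-- A self-dual complex two-form: a two-form with `*A = i·A`. -/
def SelfDual (A : Matrix (Fin 4) (Fin 4) ℂ) : Prop :=
  IsTwoForm A ∧ dual A = Complex.I • A

/-- An anti-self-dual complex two-form: a two-form with `*A = -i·A`. -/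
def AntiSelfDual (A : Matrix (Fin 4) (Fin 4) ℂ) : Prop :=
  IsTwoForm A ∧ dual A = (-Complex.I) • A

/-- A matrix with real entries. -/
def RealEntries (F : Matrix (Fin 4) (Fin 4) ℂ) : Prop :=
  ∀ i j, (F i j).im = 0

/-- `SH z = sinh z / z` for `z ≠ 0` and `SH 0 = 1`. -/
def SH (z : ℂ) : ℂ := if z = 0 then 1 else Complex.sinh z / z

/-- A generic two-form with six parameters. -/
def M6 (a b c p q r : ℂ) : Matrix (Fin 4) (Fin 4) ℂ :=
  !![0,a,b,c; a,0,p,q; b,-p,0,r; c,-q,-r,0]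

/-- A generic self-dual two-form. -/
def sdM (a b c : ℂ) : Matrix (Fin 4) (Fin 4) ℂ :=
  M6 a b c (-(Complex.I*c)) (Complex.I*b) (-(Complex.I*a))

/-- A generic anti-self-dual two-form. -/
def asdM (a b c : ℂ) : Matrix (Fin 4) (Fin 4) ℂ :=
  M6 a b c (Complex.I*c) (-(Complex.I*b)) (Complex.I*a)

set_option maxRecDepth 10000 in
set_option maxHeartbeats 1000000 in
lemma twoForm_repr {F : Matrix (Fin 4) (Fin 4) ℂ} (hF : IsTwoForm F) :
    F = M6 (F 0 1) (F 0 2) (F 0 3) (F 1 2) (F 1 3) (F 2 3) := by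
  have h : ∀ i j : Fin 4, (Fᵀ * minkEta + minkEta * F) i j = 0 := by
    intro i j; rw [hF]; rfl
  have h00 := h 0 0; have h11 := h 1 1; have h22 := h 2 2; have h33 := h 3 3
  have h10 := h 0 1; have h20 := h 0 2; have h30 := h 0 3
  have h21 := h 1 2; have h31 := h 1 3; have h32 := h 2 3
  simp (config := { decide := true }) [Matrix.add_apply, Matrix.mul_apply,
    Matrix.transpose_apply, Fin.sum_univ_four,
    minkEta, Matrix.diagonal_apply] at h00 h11 h22 h33 h10 h20 h30 h21 h31 h32
  ext i j
  fin_cases i <;> fin_cases j <;>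
    simp (config := { decide := true }) [M6] <;>
    first
      | rfl
      | linear_combination h00
      | linear_combination h11
      | linear_combination h22
      | linear_combination h33
      | linear_combination h10
      | linear_combination h20
      | linear_combination h30
      | linear_combination -h21
      | linear_combination -h31
      | linear_combination -h32
      | linear_combination -h10
      | linear_combination -h20
      | linear_combination -h30
      | linear_combination h21
      | linear_combination h31
      | linear_combination h32

set_option maxRecDepth 10000 in
set_option maxHeartbeats 4000000 in
lemma dual_M6 (a b c p q r : ℂ) :
    dual (M6 a b c p q r) = M6 (-r) q (-p) c (-b) a := by
  ext i j
  fin_cases i <;> fin_cases j <;>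
    (simp (config := { decide := true }) [dual, Fin.sum_univ_four, minkEta,
      Matrix.diagonal_apply, eps, Matrix.det_succ_row_zero, Fin.sum_univ_succ, M6,
      Pi.single_apply, Fin.val_succ] <;> ring)

set_option maxHeartbeats 1000000 in
lemma sdM_mul_asdM_comm (a b c x y z : ℂ) :
    sdM a b c * asdM x y z = asdM x y z * sdM a b c := by
  ext i j
  fin_cases i <;> fin_cases j <;>
    (simp [sdM, asdM, M6, Matrix.mul_apply, Fin.sum_univ_four] <;> ring_nf <;>
      simp [Complex.I_sq] <;> ring_nf)

lemma map_conj_sdM (a b c : ℂ) :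
    (sdM a b c).map (starRingEnd ℂ)
      = asdM ((starRingEnd ℂ) a) ((starRingEnd ℂ) b) ((starRingEnd ℂ) c) := by
  ext i j
  fin_cases i <;> fin_cases j <;>
    simp [sdM, asdM, M6, Matrix.map_apply, _root_.map_mul, Complex.conj_I] <;> ring_nf

lemma exp_map_conj (X : Matrix (Fin 4) (Fin 4) ℂ) :
    NormedSpace.exp (X.map (starRingEnd ℂ)) = (NormedSpace.exp X).map (starRingEnd ℂ) := by
  have h : ∀ Y : Matrix (Fin 4) (Fin 4) ℂ, Y.map (starRingEnd ℂ) = (Yᵀ)ᴴ := by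
    intro Y; ext i j; simp [Matrix.conjTranspose_apply]
  rw [h, Matrix.exp_conjTranspose, Matrix.exp_transpose, ← h]

set_option maxHeartbeats 1000000 in
lemma twoForm_eq_sdM {F : Matrix (Fin 4) (Fin 4) ℂ}
    (htf : IsTwoForm F) (hd : dual F = Complex.I • F) :
    F = sdM (F 0 1) (F 0 2) (F 0 3) := by
  have hrep := twoForm_repr htf
  rw [hrep, dual_M6] at hd
  have e1 := congrFun (congrFun hd 0) 1
  have e2 := congrFun (congrFun hd 0) 2
  have e3 := congrFun (congrFun hd 0) 3
  simp [M6, Matrix.smul_apply, smul_eq_mul] at e1 e2 e3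
  rw [hrep]
  ext i j
  fin_cases i <;> fin_cases j <;>
    simp (config := { decide := true }) [sdM, M6] <;>
    first
      | rfl
      | linear_combination e1
      | linear_combination -e1
      | linear_combination e2
      | linear_combination -e2
      | linear_combination e3
      | linear_combination -e3

set_option maxHeartbeats 1000000 in
lemma sd_part_eq {F : Matrix (Fin 4) (Fin 4) ℂ} (hF : IsTwoForm F) :
    (1/2 : ℂ) • (F - Complex.I • dual F)
      = sdM ((F 0 1 + Complex.I * F 2 3)/2) ((F 0 2 - Complex.I * F 1 3)/2)
          ((F 0 3 + Complex.I * F 1 2)/2) := by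
  have hrep := twoForm_repr hF
  conv_lhs => rw [hrep, dual_M6]
  ext i j
  fin_cases i <;> fin_cases j <;>
    (simp [M6, sdM, Matrix.smul_apply, Matrix.sub_apply, smul_eq_mul] <;> ring_nf <;>
      simp [Complex.I_sq] <;> ring_nf)

set_option maxHeartbeats 1000000 in
lemma real_twoForm_split {F : Matrix (Fin 4) (Fin 4) ℂ} (hF : IsTwoForm F)
    (hFr : RealEntries F) :
    F = sdM ((F 0 1 + Complex.I * F 2 3)/2) ((F 0 2 - Complex.I * F 1 3)/2)
          ((F 0 3 + Complex.I * F 1 2)/2)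
      + asdM ((starRingEnd ℂ) ((F 0 1 + Complex.I * F 2 3)/2))
          ((starRingEnd ℂ) ((F 0 2 - Complex.I * F 1 3)/2))
          ((starRingEnd ℂ) ((F 0 3 + Complex.I * F 1 2)/2)) := by
  have ha : (starRingEnd ℂ) (F 0 1) = F 0 1 := Complex.conj_eq_iff_im.2 (hFr 0 1)
  have hb : (starRingEnd ℂ) (F 0 2) = F 0 2 := Complex.conj_eq_iff_im.2 (hFr 0 2)
  have hc : (starRingEnd ℂ) (F 0 3) = F 0 3 := Complex.conj_eq_iff_im.2 (hFr 0 3)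
  have hp : (starRingEnd ℂ) (F 1 2) = F 1 2 := Complex.conj_eq_iff_im.2 (hFr 1 2)
  have hq : (starRingEnd ℂ) (F 1 3) = F 1 3 := Complex.conj_eq_iff_im.2 (hFr 1 3)
  have hr : (starRingEnd ℂ) (F 2 3) = F 2 3 := Complex.conj_eq_iff_im.2 (hFr 2 3)
  conv_lhs => rw [twoForm_repr hF]
  ext i j
  fin_cases i <;> fin_cases j <;>
    (simp [M6, sdM, asdM, Matrix.add_apply, map_div₀, map_add, map_sub, _root_.map_mul,
      map_ofNat, Complex.conj_I, ha, hb, hc, hp, hq, hr] <;> ring_nf <;>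
      simp [Complex.I_sq] <;> ring_nf)

/-- If `exp(A)·exp(B) = exp(D)` for the self-dual parts `A`, `B` of real two-forms
`F`, `G`, then `exp(F)·exp(G) = exp(D + conj(D))`. -/
theorem realTwoForm_exp_mul_exp (F G D : Matrix (Fin 4) (Fin 4) ℂ)
    (hF : IsTwoForm F) (hG : IsTwoForm G)
    (hFr : RealEntries F) (hGr : RealEntries G)
    (hD : SelfDual D)
    (hAB : NormedSpace.exp ((1/2 : ℂ) • (F - Complex.I • dual F))
        * NormedSpace.exp ((1/2 : ℂ) • (G - Complex.I • dual G))
      = NormedSpace.exp D) :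
    NormedSpace.exp F * NormedSpace.exp G
      = NormedSpace.exp (D + D.map (starRingEnd ℂ)) := by
  classical
  set α := (F 0 1 + Complex.I * F 2 3)/2 with hα
  set β := (F 0 2 - Complex.I * F 1 3)/2 with hβ
  set γ := (F 0 3 + Complex.I * F 1 2)/2 with hγ
  set x := (G 0 1 + Complex.I * G 2 3)/2 with hx
  set y := (G 0 2 - Complex.I * G 1 3)/2 with hy
  set z := (G 0 3 + Complex.I * G 1 2)/2 with hz
  set SA := sdM α β γ with hSA
  set SB := sdM x y z with hSB
  set TA := asdM ((starRingEnd ℂ) α) ((starRingEnd ℂ) β) ((starRingEnd ℂ) γ) with hTA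
  set TB := asdM ((starRingEnd ℂ) x) ((starRingEnd ℂ) y) ((starRingEnd ℂ) z) with hTB
  have hTAm : TA = SA.map (starRingEnd ℂ) := (map_conj_sdM _ _ _).symm
  have hTBm : TB = SB.map (starRingEnd ℂ) := (map_conj_sdM _ _ _).symm
  have hFsplit : F = SA + TA := real_twoForm_split hF hFr
  have hGsplit : G = SB + TB := real_twoForm_split hG hGr
  have hA : (1/2 : ℂ) • (F - Complex.I • dual F) = SA := sd_part_eq hF
  have hB : (1/2 : ℂ) • (G - Complex.I • dual G) = SB := sd_part_eq hG
  rw [hA, hB] at hAB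
  have hDrep : D = sdM (D 0 1) (D 0 2) (D 0 3) := twoForm_eq_sdM hD.1 hD.2
  have hDconj : D.map (starRingEnd ℂ)
      = asdM ((starRingEnd ℂ) (D 0 1)) ((starRingEnd ℂ) (D 0 2)) ((starRingEnd ℂ) (D 0 3)) := by
    conv_lhs => rw [hDrep]
    exact map_conj_sdM _ _ _
  have hexpF : NormedSpace.exp F = NormedSpace.exp SA * NormedSpace.exp TA := by
    rw [hFsplit]
    exact Matrix.exp_add_of_commute _ _ (sdM_mul_asdM_comm _ _ _ _ _ _)
  have hexpG : NormedSpace.exp G = NormedSpace.exp SB * NormedSpace.exp TB := by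
    rw [hGsplit]
    exact Matrix.exp_add_of_commute _ _ (sdM_mul_asdM_comm _ _ _ _ _ _)
  have hswap : Commute (NormedSpace.exp TA) (NormedSpace.exp SB) := by
    have hc : Commute TA SB := (sdM_mul_asdM_comm _ _ _ _ _ _).symm
    show _ = _
    rw [← Matrix.exp_add_of_commute _ _ hc, ← Matrix.exp_add_of_commute _ _ hc.symm, add_comm]
  have hTT : NormedSpace.exp TA * NormedSpace.exp TB
      = NormedSpace.exp (D.map (starRingEnd ℂ)) := by
    rw [hTAm, hTBm, exp_map_conj, exp_map_conj, ← Matrix.map_mul, hAB, ← exp_map_conj]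
  have hcomm : Commute D (D.map (starRingEnd ℂ)) := by
    rw [hDconj]
    conv_lhs => rw [hDrep]
    show _ = _
    conv_rhs => rw [hDrep]
    exact sdM_mul_asdM_comm _ _ _ _ _ _
  calc NormedSpace.exp F * NormedSpace.exp G
      = NormedSpace.exp SA * NormedSpace.exp TA
          * (NormedSpace.exp SB * NormedSpace.exp TB) := by rw [hexpF, hexpG]
    _ = NormedSpace.exp SA * NormedSpace.exp SB
          * (NormedSpace.exp TA * NormedSpace.exp TB) := hswap.mul_mul_mul_comm _ _
    _ = NormedSpace.exp D * NormedSpace.exp (D.map (starRingEnd ℂ)) := by rw [hAB, hTT]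
    _ = NormedSpace.exp (D + D.map (starRingEnd ℂ)) :=
        (Matrix.exp_add_of_commute _ _ hcomm).symm
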